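/- Consider the linear model: Z = (X, Y) with Y = ⟨w*, X⟩ + E, where E is independent of X with E[E] = 0. For the loss f(w, z) = (y - ⟨w, x⟩)², the covariance of the gradient satisfies Cov[∇_w f(w, Z)] = 4·E[⟨w* - w, X⟩²·XXᵀ] + 4·Var[E]·Σ - 4·Σ(w* - w)(w* - w)ᵀΣ, where Σ = E[XXᵀ]. -/

import Mathlib

open MeasureTheory ProbabilityTheory
open scoped RealInnerProductSpace

/-- For linear regression `Y = ⟨w*, X⟩ + E` with `E` independent of `X` and
mean zero, and loss `f(w,(x,y)) = (y - ⟨w,x⟩)²` with gradient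
`∇_w f = -2(⟨w*-w, x⟩ + e)·x`, the covariance matrix of the gradient is
`4·E[⟨w*-w,X⟩² XXᵀ] + 4·Var[E]·Σ - 4·Σ(w*-w)(w*-w)ᵀΣ` where `Σ = E[XXᵀ]`. -/
theorem linreg_gradient_covariance {Ω : Type*} [MeasurableSpace Ω]
    (μ : Measure Ω) [IsProbabilityMeasure μ] {d : ℕ}
    (X : Ω → EuclideanSpace ℝ (Fin d)) (e : Ω → ℝ)
    (hX : Measurable X) (he : Measurable e)
    (hindep : IndepFun X e μ)
    (hmean : (∫ ω, e ω ∂μ) = 0)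
    (hvar : Integrable (fun ω => e ω ^ 2) μ)
    (heInt : Integrable e μ)
    (hXX : ∀ i j : Fin d, Integrable (fun ω => X ω i * X ω j) μ)
    (wstar w : EuclideanSpace ℝ (Fin d))
    (g : Ω → EuclideanSpace ℝ (Fin d))
    (hg : ∀ ω, g ω = (-2 * (⟪wstar - w, X ω⟫ + e ω)) • X ω)
    (hgInt : ∀ i : Fin d, Integrable (fun ω => g ω i) μ)
    (hggInt : ∀ i j : Fin d, Integrable (fun ω => g ω i * g ω j) μ)
    (hA : ∀ i j : Fin d,
      Integrable (fun ω => ⟪wstar - w, X ω⟫ ^ 2 * (X ω i * X ω j)) μ)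
    (Sigma : Matrix (Fin d) (Fin d) ℝ)
    (hSigma : ∀ i j, Sigma i j = ∫ ω, X ω i * X ω j ∂μ)
    (M : Matrix (Fin d) (Fin d) ℝ)
    (hM : ∀ i j, M i j = (wstar - w) i * (wstar - w) j) :
    ∀ i j : Fin d,
      (∫ ω, g ω i * g ω j ∂μ) - (∫ ω, g ω i ∂μ) * (∫ ω, g ω j ∂μ) =
        4 * (∫ ω, ⟪wstar - w, X ω⟫ ^ 2 * (X ω i * X ω j) ∂μ)
          + 4 * variance e μ * Sigma i j
          - 4 * (Sigma * M * Sigma) i j := by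
  intro i j
  have hXm : ∀ k : Fin d, Measurable fun ω => X ω k := fun k =>
    (measurable_pi_apply k).comp ((WithLp.measurable_ofLp _ _).comp hX)
  -- inner product expansion
  have hS : ∀ ω, (⟪wstar - w, X ω⟫ : ℝ) = ∑ m, (wstar - w) m * X ω m := by
    intro ω
    simp [PiLp.inner_apply, RCLike.inner_apply, conj_trivial]
    exact Finset.sum_congr rfl fun _ _ => mul_comm _ _
  have hSmeas : Measurable fun ω => (⟪wstar - w, X ω⟫ : ℝ) := by
    simp only [hS]
    exact Finset.measurable_sum _ fun m _ => (hXm m).const_mul _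
  -- L² / integrability facts
  have hXiL2 : ∀ k : Fin d, MemLp (fun ω => X ω k) 2 μ := fun k =>
    (memLp_two_iff_integrable_sq (hXm k).aestronglyMeasurable).mpr
      (by simpa [sq] using hXX k k)
  have hXiInt : ∀ k : Fin d, Integrable (fun ω => X ω k) μ := fun k =>
    (hXiL2 k).integrable one_le_two
  have heL2 : MemLp e 2 μ := (memLp_two_iff_integrable_sq he.aestronglyMeasurable).mpr hvar
  -- pointwise form of g
  have hgk : ∀ (k : Fin d) ω, g ω k = -2 * (⟪wstar - w, X ω⟫ + e ω) * X ω k := by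
    intro k ω; rw [hg]; rfl
  -- symmetry of Sigma
  have hSym : ∀ a b : Fin d, Sigma a b = Sigma b a := by
    intro a b; rw [hSigma, hSigma]; simp [mul_comm]
  -- independence-based zero/product integrals
  have hIndexj : ∀ (φ : EuclideanSpace ℝ (Fin d) → ℝ) (ψ : ℝ → ℝ),
      Measurable φ → Measurable ψ →
      ∫ ω, φ (X ω) * ψ (e ω) ∂μ = (∫ ω, φ (X ω) ∂μ) * (∫ ω, ψ (e ω) ∂μ) := by
    intro φ ψ hφ hψ
    exact (hindep.comp hφ hψ).integral_fun_mul_eq_mul_integral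
      (hφ.comp hX).aestronglyMeasurable (hψ.comp he).aestronglyMeasurable
  have hIndInt : ∀ (φ : EuclideanSpace ℝ (Fin d) → ℝ) (ψ : ℝ → ℝ),
      Measurable φ → Measurable ψ →
      Integrable (fun ω => φ (X ω)) μ → Integrable (fun ω => ψ (e ω)) μ →
      Integrable (fun ω => φ (X ω) * ψ (e ω)) μ := by
    intro φ ψ hφ hψ h1 h2
    exact (hindep.comp hφ hψ).integrable_mul h1 h2
  -- integral of e * X k is zero
  have heX : ∀ k : Fin d, ∫ ω, e ω * X ω k ∂μ = 0 := by
    intro k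
    have := hIndexj (fun x => x k) id ((measurable_pi_apply k).comp (WithLp.measurable_ofLp _ _)) measurable_id
    simp only [id] at this
    calc ∫ ω, e ω * X ω k ∂μ = ∫ ω, X ω k * e ω ∂μ := by
          congr 1; funext ω; ring
      _ = (∫ ω, X ω k ∂μ) * (∫ ω, e ω ∂μ) := this
      _ = 0 := by rw [hmean, mul_zero]
  have heXInt : ∀ k : Fin d, Integrable (fun ω => e ω * X ω k) μ := by
    intro k
    have := hIndInt (fun x => x k) id ((measurable_pi_apply k).comp (WithLp.measurable_ofLp _ _)) measurable_id
      (hXiInt k) heInt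
    exact this.congr (Filter.Eventually.of_forall fun ω => by simp [mul_comm])
  -- integral of ⟪v, X⟫ * X k
  have hSXInt : ∀ k : Fin d, Integrable (fun ω => ⟪wstar - w, X ω⟫ * X ω k) μ := by
    intro k
    have heq : (fun ω => (⟪wstar - w, X ω⟫ : ℝ) * X ω k)
        = fun ω => ∑ m, (wstar - w) m * (X ω m * X ω k) := by
      funext ω; rw [hS, Finset.sum_mul]; congr 1; funext m; ring
    rw [heq]
    exact integrable_finset_sum _ fun m _ => (hXX m k).const_mul _
  have hSX : ∀ k : Fin d, ∫ ω, ⟪wstar - w, X ω⟫ * X ω k ∂μ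
      = ∑ m, (wstar - w) m * Sigma m k := by
    intro k
    have heq : (fun ω => (⟪wstar - w, X ω⟫ : ℝ) * X ω k)
        = fun ω => ∑ m, (wstar - w) m * (X ω m * X ω k) := by
      funext ω; rw [hS, Finset.sum_mul]; congr 1; funext m; ring
    rw [heq, integral_finset_sum _ fun m _ => (hXX m k).const_mul _]
    exact Finset.sum_congr rfl fun m _ => by
      rw [integral_const_mul, hSigma]
  -- first moment of g
  have hIg : ∀ k : Fin d, ∫ ω, g ω k ∂μ = -2 * ∑ m, (wstar - w) m * Sigma m k := by
    intro k
    have heq : (fun ω => g ω k)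
        = fun ω => (-2 : ℝ) * (⟪wstar - w, X ω⟫ * X ω k) + (-2) * (e ω * X ω k) := by
      funext ω; rw [hgk]; ring
    rw [heq, integral_add (((hSXInt k).const_mul _)) ((heXInt k).const_mul _),
      integral_const_mul, integral_const_mul, hSX, heX]
    ring
  -- second moment of g
  have hCInt : Integrable (fun ω => (X ω i * X ω j) * e ω ^ 2) μ :=
    hIndInt (fun x => x i * x j) (fun t => t ^ 2)
      (((measurable_pi_apply i).comp (WithLp.measurable_ofLp _ _)).mul ((measurable_pi_apply j).comp (WithLp.measurable_ofLp _ _)))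
      (measurable_id.pow_const 2) (hXX i j) hvar
  have hBmeas : Measurable fun ω => (⟪wstar - w, X ω⟫ * (X ω i * X ω j)) * e ω :=
    (hSmeas.mul ((hXm i).mul (hXm j))).mul he
  have hpt : ∀ ω, g ω i * g ω j
      = 4 * (⟪wstar - w, X ω⟫ ^ 2 * (X ω i * X ω j))
        + 8 * ((⟪wstar - w, X ω⟫ * (X ω i * X ω j)) * e ω)
        + 4 * ((X ω i * X ω j) * e ω ^ 2) := by
    intro ω; rw [hgk, hgk]; ring
  have hBInt : Integrable (fun ω => (⟪wstar - w, X ω⟫ * (X ω i * X ω j)) * e ω) μ := by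
    have h8 : Integrable (fun ω =>
        (8 : ℝ) * ((⟪wstar - w, X ω⟫ * (X ω i * X ω j)) * e ω)) μ := by
      have heq : (fun ω => (8 : ℝ) * ((⟪wstar - w, X ω⟫ * (X ω i * X ω j)) * e ω))
          = fun ω => g ω i * g ω j
            - 4 * (⟪wstar - w, X ω⟫ ^ 2 * (X ω i * X ω j))
            - 4 * ((X ω i * X ω j) * e ω ^ 2) := by
        funext ω; rw [hpt]; ring
      rw [heq]
      exact ((hggInt i j).sub ((hA i j).const_mul 4)).sub (hCInt.const_mul 4)
    have := h8.const_mul (8 : ℝ)⁻¹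
    exact this.congr (Filter.Eventually.of_forall fun ω => by ring)
  have hB0 : ∫ ω, (⟪wstar - w, X ω⟫ * (X ω i * X ω j)) * e ω ∂μ = 0 := by
    have hφ : Measurable fun x : EuclideanSpace ℝ (Fin d) =>
        (⟪wstar - w, x⟫ : ℝ) * (x i * x j) := by
      have h1 : Measurable fun x : EuclideanSpace ℝ (Fin d) => (⟪wstar - w, x⟫ : ℝ) :=
        (continuous_const.inner continuous_id).measurable
      exact h1.mul (((measurable_pi_apply i).comp (WithLp.measurable_ofLp _ _)).mul ((measurable_pi_apply j).comp (WithLp.measurable_ofLp _ _)))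
    have := hIndexj (fun x => ⟪wstar - w, x⟫ * (x i * x j)) id hφ measurable_id
    simp only [id] at this
    rw [this, hmean, mul_zero]
  have hC : ∫ ω, (X ω i * X ω j) * e ω ^ 2 ∂μ = Sigma i j * ∫ ω, e ω ^ 2 ∂μ := by
    have := hIndexj (fun x => x i * x j) (fun t => t ^ 2)
      (((measurable_pi_apply i).comp (WithLp.measurable_ofLp _ _)).mul ((measurable_pi_apply j).comp (WithLp.measurable_ofLp _ _))) (measurable_id.pow_const 2)
    rw [this, hSigma]
  have hIgg : ∫ ω, g ω i * g ω j ∂μ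
      = 4 * (∫ ω, ⟪wstar - w, X ω⟫ ^ 2 * (X ω i * X ω j) ∂μ)
        + 4 * (Sigma i j * ∫ ω, e ω ^ 2 ∂μ) := by
    have heq : (fun ω => g ω i * g ω j)
        = fun ω => 4 * (⟪wstar - w, X ω⟫ ^ 2 * (X ω i * X ω j))
            + 8 * ((⟪wstar - w, X ω⟫ * (X ω i * X ω j)) * e ω)
            + 4 * ((X ω i * X ω j) * e ω ^ 2) := funext hpt
    have h1 : (∫ ω, (4 * (⟪wstar - w, X ω⟫ ^ 2 * (X ω i * X ω j))
            + 8 * ((⟪wstar - w, X ω⟫ * (X ω i * X ω j)) * e ω)) ∂μ)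
        = (∫ ω, 4 * (⟪wstar - w, X ω⟫ ^ 2 * (X ω i * X ω j)) ∂μ)
          + ∫ ω, 8 * ((⟪wstar - w, X ω⟫ * (X ω i * X ω j)) * e ω) ∂μ :=
      integral_add ((hA i j).const_mul 4) (hBInt.const_mul 8)
    have hABInt : Integrable (fun ω =>
        4 * (⟪wstar - w, X ω⟫ ^ 2 * (X ω i * X ω j))
          + 8 * ((⟪wstar - w, X ω⟫ * (X ω i * X ω j)) * e ω)) μ :=
      ((hA i j).const_mul 4).add (hBInt.const_mul 8)
    rw [heq, integral_add hABInt (hCInt.const_mul 4), h1, integral_const_mul, integral_const_mul, integral_const_mul, hB0, hC]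
    ring
  -- variance
  have hvar' : variance e μ = ∫ ω, e ω ^ 2 ∂μ := by
    rw [variance_eq_sub heL2, hmean]
    simp [sq]
  -- matrix identity
  have hmat : (Sigma * M * Sigma) i j
      = (∑ m, (wstar - w) m * Sigma m i) * (∑ m, (wstar - w) m * Sigma m j) := by
    rw [Finset.sum_mul_sum]
    simp only [Matrix.mul_apply, Finset.sum_mul, hM]
    rw [Finset.sum_comm]
    refine Finset.sum_congr rfl fun k _ => Finset.sum_congr rfl fun l _ => ?_
    rw [hSym k i]
    ring
  rw [hIgg, hIg i, hIg j, hvar', hmat]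
  ring
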